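/- Let (X,f) be an (F,B)-dialgebra, C a full subcategory of the coslice category (X,f)/E (E the subcategory of epimorphisms of Dialg(F,B)) containing the identity of (X,f), and let F̄, Ḡ : C → Set be functors with F̄ preserving epimorphisms. Then there is a one-to-one correspondence between natural transformations δ : F̄ ⟹ Ḡ and functions k : F̄(id_{(X,f)}) → Ḡ(id_{(X,f)}) that are bisimulation invariant, i.e., for every object h of C (viewed as an arrow ĥ : id_{(X,f)} → h in C) and all x₁,x₂, F̄(ĥ)(x₁) = F̄(ĥ)(x₂) implies Ḡ(ĥ)(k x₁) = Ḡ(ĥ)(k x₂). Each natural δ is uniquely determined by its component δ at id_{(X,f)}, which is invariant; conversely each invariant k extends uniquely to a natural transformation. -/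

import Mathlib

open CategoryTheory

universe u

/-- An (F,B)-dialgebra: a set together with a map `F X → B X`. -/
structure Dialgebra (F B : Type u ⥤ Type u) where
  carrier : Type u
  str : F.obj carrier → B.obj carrier

/-- A dialgebra homomorphism: `g ∘ F h = B h ∘ f`. -/
def IsDialgHom {F B : Type u ⥤ Type u} (X Y : Dialgebra F B)
    (h : X.carrier → Y.carrier) : Prop :=
  Y.str ∘ F.map (TypeCat.ofHom h) = B.map (TypeCat.ofHom h) ∘ X.str

instance dialgCategory (F B : Type u ⥤ Type u) : Category (Dialgebra F B) where
  Hom X Y := { h : X.carrier → Y.carrier // IsDialgHom X Y h }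
  id X := ⟨id, by
    show X.str ∘ F.map (TypeCat.ofHom id) = B.map (TypeCat.ofHom id) ∘ X.str
    rw [show TypeCat.ofHom (id : X.carrier → X.carrier) = 𝟙 X.carrier from rfl,
      F.map_id, B.map_id]; rfl⟩
  comp {X Y Z} f g := ⟨g.1 ∘ f.1, by
    have hf := f.2; have hg := g.2
    simp only [IsDialgHom] at *
    have h1 : F.map (TypeCat.ofHom (g.1 ∘ f.1)) =
        (TypeCat.ofHom f.1 ≫ TypeCat.ofHom g.1 |> F.map) := rfl
    have h2 : B.map (TypeCat.ofHom (g.1 ∘ f.1)) =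
        (TypeCat.ofHom f.1 ≫ TypeCat.ofHom g.1 |> B.map) := rfl
    rw [F.map_comp] at h1; rw [B.map_comp] at h2
    calc Z.str ∘ F.map (TypeCat.ofHom (g.1 ∘ f.1))
          = (Z.str ∘ F.map (TypeCat.ofHom g.1)) ∘ F.map (TypeCat.ofHom f.1) := by
          rw [h1]; rfl
      _ = (B.map (TypeCat.ofHom g.1) ∘ Y.str) ∘ F.map (TypeCat.ofHom f.1) := by rw [hg]
      _ = B.map (TypeCat.ofHom g.1) ∘ (Y.str ∘ F.map (TypeCat.ofHom f.1)) := rfl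
      _ = B.map (TypeCat.ofHom g.1) ∘ (B.map (TypeCat.ofHom f.1) ∘ X.str) := by rw [hf]
      _ = B.map (TypeCat.ofHom (g.1 ∘ f.1)) ∘ X.str := by rw [h2]; rfl⟩
  id_comp f := Subtype.ext rfl
  comp_id f := Subtype.ext rfl
  assoc f g h := Subtype.ext rfl

open CategoryTheory in
/-- Theorem (one-to-one correspondence between natural transformations and
bisimulation invariants).  Let `(X,f)` be a dialgebra, `C` a full subcategory of
the coslice `(X,f)/E` (where `E` consists of the epimorphisms of `Dialg(F,B)`)
containing the identity of `(X,f)`, and `F̄, Ḡ : C ⥤ Set` with `F̄` preserving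
epimorphisms.  Every natural transformation `δ : F̄ ⟹ Ḡ` has bisimulation
invariant component at `id_{(X,f)}` and is uniquely determined by it; conversely
every bisimulation invariant extends uniquely to a natural transformation. -/
theorem invariants_correspond_to_natural_transformations
    (F B : Type u ⥤ Type u) (X : Dialgebra F B)
    (P : Under X → Prop)
    (hPid : P (Under.mk (𝟙 X)))
    (hPepi : ∀ u : Under X, P u → Epi u.hom)
    (Fb Gb : ObjectProperty.FullSubcategory P ⥤ Type u)
    (hFb : ∀ {c c' : ObjectProperty.FullSubcategory P} (k : c ⟶ c'), Epi k → Epi (Fb.map k)) :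
    let c₀ : ObjectProperty.FullSubcategory P := ⟨Under.mk (𝟙 X), hPid⟩
    ∀ hat : ∀ c : ObjectProperty.FullSubcategory P, c₀ ⟶ c,
      -- `hat c` is the canonical arrow `ĥ : id_{(X,f)} → h` in the coslice
      (∀ c : ObjectProperty.FullSubcategory P, (hat c).hom.right = c.obj.hom) →
      -- bisimulation invariance of a function k
      let Inv : (Fb.obj c₀ → Gb.obj c₀) → Prop := fun k =>
        ∀ (c : ObjectProperty.FullSubcategory P) (x₁ x₂ : Fb.obj c₀),
          Fb.map (hat c) x₁ = Fb.map (hat c) x₂ →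
          Gb.map (hat c) (k x₁) = Gb.map (hat c) (k x₂)
      (∀ δ : Fb ⟶ Gb, Inv (δ.app c₀)) ∧
      (∀ δ δ' : Fb ⟶ Gb, δ.app c₀ = δ'.app c₀ → δ = δ') ∧
      (∀ k : Fb.obj c₀ → Gb.obj c₀, Inv k → ∃! δ : Fb ⟶ Gb, δ.app c₀ = k) := by
 -- begin proof
  intro c₀ hat hright Inv
  -- homs out of c₀ are unique
  have huniq : ∀ (c : ObjectProperty.FullSubcategory P) (f g : c₀ ⟶ c), f = g := by
    intro c f g
    apply ObjectProperty.hom_ext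
    apply CommaMorphism.ext
    · exact Subsingleton.elim _ _
    · have hf : (𝟙 X) ≫ f.hom.right = c.obj.hom := Under.w f.hom
      have hg : (𝟙 X) ≫ g.hom.right = c.obj.hom := Under.w g.hom
      simp only [Category.id_comp] at hf hg
      exact hf.trans hg.symm
  -- hat c is an epimorphism in the subcategory
  have epi_hat : ∀ c : ObjectProperty.FullSubcategory P, Epi (hat c) := by
    intro c
    constructor
    intro Z g h eq
    apply ObjectProperty.hom_ext
    apply CommaMorphism.ext
    · exact Subsingleton.elim _ _
    · have h1 : (hat c).hom.right ≫ g.hom.right = (hat c).hom.right ≫ h.hom.right :=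
        congrArg (fun t => t.hom.right) eq
      rw [hright c] at h1
      have := hPepi c.obj c.property
      exact (cancel_epi c.obj.hom).mp h1
  have surj : ∀ c : ObjectProperty.FullSubcategory P, Function.Surjective (Fb.map (hat c)) := by
    intro c
    have := hFb (hat c) (epi_hat c)
    exact (epi_iff_surjective _).mp this
  refine ⟨?_, ?_, ?_⟩
  · intro δ c x₁ x₂ hx
    have n₁ := types_congr_hom (δ.naturality (hat c)) x₁
    have n₂ := types_congr_hom (δ.naturality (hat c)) x₂
    simp only [types_comp_apply] at n₁ n₂
    rw [← n₁, ← n₂, hx]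
  · intro δ δ' h0
    apply NatTrans.ext
    funext c
    refine ConcreteCategory.hom_ext _ _ fun y => ?_
    obtain ⟨x, rfl⟩ := surj c y
    have n₁ := types_congr_hom (δ.naturality (hat c)) x
    have n₂ := types_congr_hom (δ'.naturality (hat c)) x
    simp only [types_comp_apply] at n₁ n₂
    rw [n₁, n₂, h0]
  · intro k hk
    classical
    have key : ∀ (c : ObjectProperty.FullSubcategory P) (x : Fb.obj c₀),
        Gb.map (hat c) (k (Function.surjInv (surj c) (Fb.map (hat c) x)))
          = Gb.map (hat c) (k x) := by
      intro c x
      exact hk c _ x (Function.surjInv_eq (surj c) _)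
    refine ⟨⟨fun c => TypeCat.ofHom fun y => Gb.map (hat c) (k (Function.surjInv (surj c) y)), ?_⟩, ?_, ?_⟩
    · intro c c' m
      refine ConcreteCategory.hom_ext _ _ fun y => ?_
      obtain ⟨x, rfl⟩ := surj c y
      simp only [types_comp_apply]
      have hcomp : hat c ≫ m = hat c' := huniq c' _ _
      have hmx : Fb.map m (Fb.map (hat c) x) = Fb.map (hat c') x := by
        rw [← hcomp, FunctorToTypes.map_comp_apply]
      have hgm : ∀ z, Gb.map m (Gb.map (hat c) z) = Gb.map (hat c') z := by
        intro z; rw [← hcomp, FunctorToTypes.map_comp_apply]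
      rw [hmx]
      calc Gb.map (hat c') (k (Function.surjInv (surj c') (Fb.map (hat c') x)))
          = Gb.map (hat c') (k x) := key c' x
        _ = Gb.map m (Gb.map (hat c) (k x)) := (hgm _).symm
        _ = Gb.map m (Gb.map (hat c) (k (Function.surjInv (surj c) (Fb.map (hat c) x)))) := by
            rw [key c x]
    · funext y
      have h0 : hat c₀ = 𝟙 c₀ := huniq c₀ _ _
      have : Fb.map (hat c₀) y = y := by rw [h0, Fb.map_id]; rfl
      calc Gb.map (hat c₀) (k (Function.surjInv (surj c₀) y))
          = Gb.map (hat c₀) (k (Function.surjInv (surj c₀) (Fb.map (hat c₀) y))) := by rw [this]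
        _ = Gb.map (hat c₀) (k y) := key c₀ y
        _ = k y := by rw [h0, Gb.map_id]; rfl
    · intro δ' hδ'
      apply NatTrans.ext
      funext c
      refine ConcreteCategory.hom_ext _ _ fun y => ?_
      obtain ⟨x, rfl⟩ := surj c y
      have n := types_congr_hom (δ'.naturality (hat c)) x
      simp only [types_comp_apply] at n
      rw [n, hδ']
      exact (key c x).symm
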